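/- Let R be a ring and X a right R-module such that every monomorphism i : X → M of right R-modules whose cokernel M/Im(i) is cyclic (generated by one element) splits. Then X is an injective right R-module. -/

import Mathlib

universe u v

section Aux

variable {R : Type u} [Ring R] {X : Type v} [AddCommGroup X] [Module Rᵐᵒᵖ X]

/-- Key step: if every mono out of `X` with cyclic cokernel splits, then any map from a
submodule `N` of `B` to `X` extends to `N ⊔ span {y}`. -/
private theorem adjoin_step
    (h : ∀ (M : Type v) [AddCommGroup M] [Module Rᵐᵒᵖ M] (i : X →ₗ[Rᵐᵒᵖ] M),
      Function.Injective i →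
      (∃ m : M ⧸ LinearMap.range i, Submodule.span Rᵐᵒᵖ {m} = ⊤) →
      ∃ p : M →ₗ[Rᵐᵒᵖ] X, p ∘ₗ i = LinearMap.id)
    {B : Type v} [AddCommGroup B] [Module Rᵐᵒᵖ B] (N : Submodule Rᵐᵒᵖ B)
    (g : ↥N →ₗ[Rᵐᵒᵖ] X) (y : B) :
    ∃ g' : ↥(N ⊔ Submodule.span Rᵐᵒᵖ {y}) →ₗ[Rᵐᵒᵖ] X,
      ∀ n : N, g' (Submodule.inclusion le_sup_left n) = g n := by
  set S := N ⊔ Submodule.span Rᵐᵒᵖ {y} with hS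
  let ι : ↥N →ₗ[Rᵐᵒᵖ] ↥S := Submodule.inclusion le_sup_left
  let φ : ↥N →ₗ[Rᵐᵒᵖ] X × ↥S := LinearMap.prod g (-ι)
  let K : Submodule Rᵐᵒᵖ (X × ↥S) := LinearMap.range φ
  let i : X →ₗ[Rᵐᵒᵖ] (X × ↥S) ⧸ K := K.mkQ ∘ₗ LinearMap.inl Rᵐᵒᵖ X ↥S
  have key : ∀ n : N, K.mkQ (0, ι n) = K.mkQ (g n, 0) := by
    intro n
    rw [← sub_eq_zero, ← map_sub]
    simp only [Submodule.mkQ_apply, Submodule.Quotient.mk_eq_zero]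
    refine ⟨-n, ?_⟩
    simp [φ, Prod.ext_iff]
  have hi : Function.Injective i := by
    intro a b hab
    rw [← sub_eq_zero]
    have : i (a - b) = 0 := by rw [map_sub, hab, sub_self]
    have h2 : ((a - b : X), (0 : ↥S)) ∈ K := by
      rw [← Submodule.Quotient.mk_eq_zero]
      simpa [i, Submodule.mkQ_apply] using this
    obtain ⟨n, hn⟩ := h2
    have h3 : ι n = 0 := by
      have := congrArg Prod.snd hn
      simpa [φ] using neg_eq_zero.mp this
    have hn0 : n = 0 := Submodule.inclusion_injective le_sup_left (by simpa using h3)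
    have := congrArg Prod.fst hn
    simp [φ, hn0] at this
    exact this.symm
  have ymem : y ∈ S := Submodule.mem_sup_right (Submodule.mem_span_singleton_self y)
  set π := (LinearMap.range i).mkQ with hπ
  have cyc : ∃ m : ((X × ↥S) ⧸ K) ⧸ LinearMap.range i,
      Submodule.span Rᵐᵒᵖ {m} = ⊤ := by
    refine ⟨π (K.mkQ (0, ⟨y, ymem⟩)), Submodule.eq_top_iff'.mpr fun z => ?_⟩
    obtain ⟨w, rfl⟩ := Submodule.Quotient.mk_surjective _ z
    obtain ⟨⟨x, s⟩, rfl⟩ := Submodule.Quotient.mk_surjective _ w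
    obtain ⟨a, ha, b, hb, hab⟩ := Submodule.mem_sup.mp s.2
    obtain ⟨r, rfl⟩ := Submodule.mem_span_singleton.mp hb
    have hsplit : (x, s) = ((x, 0) : X × ↥S) + (0, ι ⟨a, ha⟩) + r • (0, ⟨y, ymem⟩) := by
      refine Prod.ext (by simp) ?_
      apply Subtype.ext
      simp [ι, ← hab]
    rw [hsplit]
    have e1 : π (K.mkQ ((x, 0) : X × ↥S)) = 0 := by
      rw [hπ]
      simp only [Submodule.mkQ_apply, Submodule.Quotient.mk_eq_zero]
      exact ⟨x, rfl⟩
    have e2 : π (K.mkQ ((0, ι ⟨a, ha⟩) : X × ↥S)) = 0 := by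
      rw [key ⟨a, ha⟩, hπ]
      simp only [Submodule.mkQ_apply, Submodule.Quotient.mk_eq_zero]
      exact ⟨g ⟨a, ha⟩, rfl⟩
    show π (K.mkQ _) ∈ _
    rw [map_add, map_add, map_add, map_add, e1, e2, map_smul, map_smul]
    simpa using Submodule.smul_mem _ r (Submodule.mem_span_singleton_self _)
  obtain ⟨p, hp⟩ := h ((X × ↥S) ⧸ K) i hi cyc
  refine ⟨p ∘ₗ K.mkQ ∘ₗ LinearMap.inr Rᵐᵒᵖ X ↥S, fun n => ?_⟩
  have e : p (K.mkQ (0, ι n)) = g n := by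
    rw [key n]
    exact LinearMap.congr_fun hp (g n)
  exact e

end Aux

/-- If every monomorphism `i : X → M` of right `R`-modules (as `Rᵐᵒᵖ`-modules) whose
cokernel `M/Im i` is cyclic splits, then `X` is injective. -/
theorem stmt15 {R : Type u} [Ring R] (X : Type v) [AddCommGroup X] [Module Rᵐᵒᵖ X]
    (h : ∀ (M : Type v) [AddCommGroup M] [Module Rᵐᵒᵖ M] (i : X →ₗ[Rᵐᵒᵖ] M),
      Function.Injective i →
      (∃ m : M ⧸ LinearMap.range i, Submodule.span Rᵐᵒᵖ {m} = ⊤) →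
      ∃ p : M →ₗ[Rᵐᵒᵖ] X, p ∘ₗ i = LinearMap.id) :
    Module.Injective Rᵐᵒᵖ X := by
  constructor
  intro A B _ _ _ _ f hf g
  haveI : Fact (Function.Injective f) := ⟨hf⟩
  set E := Module.Baer.extensionOfMax f g with hE
  have htop : E.domain = ⊤ := by
    refine Submodule.eq_top_iff'.mpr fun y => ?_
    obtain ⟨g', hg'⟩ := adjoin_step h E.domain E.toLinearPMap.toFun y
    let E' : Module.Baer.ExtensionOf f g :=
      { domain := E.domain ⊔ Submodule.span Rᵐᵒᵖ {y}
        toFun := g'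
        le := E.le.trans le_sup_left
        is_extension := fun m => by
          have := hg' ⟨f m, E.le ⟨m, rfl⟩⟩
          rw [E.is_extension m]
          exact this.symm }
    have hle : E ≤ E' := by
      refine ⟨le_sup_left, fun x x' EQ => ?_⟩
      have : x' = Submodule.inclusion le_sup_left x := Subtype.ext EQ.symm
      rw [this]
      exact (hg' x).symm
    have := Module.Baer.extensionOfMax_is_max f g E' hle
    rw [← hE] at this
    rw [← this]
    exact Submodule.mem_sup_right (Submodule.mem_span_singleton_self y)
  refine ⟨{ toFun := fun b => E.toLinearPMap ⟨b, htop ▸ Submodule.mem_top⟩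
            map_add' := fun x y => by rw [← LinearPMap.map_add]; congr
            map_smul' := fun r x => by rw [← LinearPMap.map_smul]; rfl }, fun a => ?_⟩
  exact (E.is_extension a).symm
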